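/- Every nonzero homogeneous (with respect to total degree) polynomial lying in the intersection J_{P2} ∩ J_{K13} has total degree at least 4. Equivalently, the ideal J_{P2} ∩ J_{K13} is generated in degrees at least four. -/

import Mathlib

/- Variables: the polynomial ring K[x1,x2,x3,x4,y1,y2,y3,y4] is modelled as
`MvPolynomial (Fin 4 ⊕ Fin 4) K`, where `x (k-1) = X (Sum.inl (k-1))` stands for x_k and
`y (k-1) = X (Sum.inr (k-1))` stands for y_k. -/

open MvPolynomial

noncomputable section

variable (K : Type*) [Field K]

def wt : Fin 4 ⊕ Fin 4 → ℕ := Sum.elim ![12, 3, 20, 36] ![10, 5, 18, 34]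

noncomputable def tau : MvPolynomial (Fin 4 ⊕ Fin 4) K →ₐ[K] Polynomial K :=
  aeval (fun v => Polynomial.X ^ wt v)

lemma degree_single_one (v : Fin 4 ⊕ Fin 4) : (Finsupp.single v 1).degree = 1 := by
  rw [Finsupp.degree_apply, Finsupp.support_single_ne_zero v one_ne_zero]
  simp

lemma degree_le_one_cases (m : (Fin 4 ⊕ Fin 4) →₀ ℕ) (hm : m.degree ≤ 1) :
    m = 0 ∨ ∃ v, m = Finsupp.single v 1 := by
  have hdeg : m.degree = ∑ v : Fin 4 ⊕ Fin 4, m v := by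
    rw [Finsupp.degree_apply]
    exact Finset.sum_subset (Finset.subset_univ _)
      (fun v _ hv => Finsupp.notMem_support_iff.mp hv)
  rw [hdeg] at hm
  by_cases h0 : ∀ v, m v = 0
  · left; ext v; exact h0 v
  · push_neg at h0
    obtain ⟨v, hv⟩ := h0
    right
    refine ⟨v, ?_⟩
    have hle : m v ≤ ∑ w : Fin 4 ⊕ Fin 4, m w :=
      Finset.single_le_sum (f := fun w => m w) (fun _ _ => Nat.zero_le _)
        (Finset.mem_univ v)
    have hv1 : m v = 1 := by omega
    ext u
    rcases eq_or_ne u v with rfl | hu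
    · simp [hv1]
    · have hsub : ({u, v} : Finset (Fin 4 ⊕ Fin 4)) ⊆ Finset.univ := Finset.subset_univ _
      have h2 : ∑ w ∈ ({u, v} : Finset (Fin 4 ⊕ Fin 4)), m w ≤
          ∑ w : Fin 4 ⊕ Fin 4, m w :=
        Finset.sum_le_sum_of_subset hsub
      rw [Finset.sum_pair hu] at h2
      have hu0 : m u = 0 := by omega
      simp [Finsupp.single_eq_of_ne hu, hu0]

lemma tau_inj_low (h : MvPolynomial (Fin 4 ⊕ Fin 4) K) (hdeg : h.totalDegree ≤ 1)
    (ht : tau K h = 0) : h = 0 := by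
  have repr : h = C (coeff 0 h) +
      ∑ v : Fin 4 ⊕ Fin 4, C (coeff (Finsupp.single v 1) h) * X v := by
    ext m
    rw [coeff_add, coeff_C, MvPolynomial.coeff_sum]
    by_cases hm : m.degree ≤ 1
    · rcases degree_le_one_cases m hm with rfl | ⟨v, rfl⟩
      · simp [coeff_C_mul, coeff_X', Finsupp.single_eq_zero]
      · have h0 : ¬((0 : (Fin 4 ⊕ Fin 4) →₀ ℕ) = Finsupp.single v 1) := by
          intro he
          have := degree_single_one v
          rw [← he, map_zero] at this
          exact absurd this (by norm_num)
        simp only [coeff_C_mul, coeff_X', h0, if_false, mul_ite, mul_one, mul_zero,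
          Finsupp.single_left_inj (one_ne_zero (α := ℕ))]
        rw [Finset.sum_ite_eq' Finset.univ v (fun u => coeff (Finsupp.single u 1) h)]
        simp
    · have hz : coeff m h = 0 := by
        apply coeff_eq_zero_of_totalDegree_lt
        have h1 : 1 < m.degree := by omega
        calc h.totalDegree ≤ 1 := hdeg
          _ < m.degree := h1
          _ = ∑ i ∈ m.support, m i := rfl
      have hm0 : ¬((0 : (Fin 4 ⊕ Fin 4) →₀ ℕ) = m) := by
        rintro rfl; rw [map_zero] at hm; omega
      have hms : ∀ u : Fin 4 ⊕ Fin 4, ¬(Finsupp.single u 1 = m) := by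
        rintro u rfl; rw [degree_single_one] at hm; omega
      simp [hz, coeff_C_mul, coeff_X', hm0, hms]
  rw [repr] at ht
  simp only [map_add, map_sum, map_mul, tau, aeval_C, aeval_X, Fintype.sum_sum_type,
    Fin.sum_univ_four, wt, Sum.elim_inl, Sum.elim_inr, Matrix.cons_val_zero,
    Matrix.cons_val_one, Matrix.head_cons, Matrix.cons_val_two, Matrix.tail_cons,
    Matrix.cons_val_three] at ht
  have e0 := congrArg (Polynomial.coeff · 0) ht
  have e1 := congrArg (Polynomial.coeff · 12) ht
  have e2 := congrArg (Polynomial.coeff · 3) ht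
  have e3 := congrArg (Polynomial.coeff · 20) ht
  have e4 := congrArg (Polynomial.coeff · 36) ht
  have e5 := congrArg (Polynomial.coeff · 10) ht
  have e6 := congrArg (Polynomial.coeff · 5) ht
  have e7 := congrArg (Polynomial.coeff · 18) ht
  have e8 := congrArg (Polynomial.coeff · 34) ht
  simp [Polynomial.coeff_X_pow, Polynomial.coeff_C] at e0 e1 e2 e3 e4 e5 e6 e7 e8
  rw [repr]
  simp [Fintype.sum_sum_type, Fin.sum_univ_four, e0, e1, e2, e3, e4, e5, e6, e7, e8]

/-- x_(i+1) -/
noncomputable def x (i : Fin 4) : MvPolynomial (Fin 4 ⊕ Fin 4) K := X (Sum.inl i)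

/-- y_(i+1) -/
noncomputable def y (i : Fin 4) : MvPolynomial (Fin 4 ⊕ Fin 4) K := X (Sum.inr i)

/-- The parity binomial edge ideal of the single edge {1,3}. -/
noncomputable def JP2 : Ideal (MvPolynomial (Fin 4 ⊕ Fin 4) K) :=
  Ideal.span {x K 0 * x K 2 - y K 0 * y K 2}

/-- The parity binomial edge ideal of the star with center 2 and leaves 1,3,4. -/
noncomputable def JK13 : Ideal (MvPolynomial (Fin 4 ⊕ Fin 4) K) :=
  Ideal.span {x K 0 * x K 1 - y K 0 * y K 1,
              x K 1 * x K 2 - y K 1 * y K 2,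
              x K 1 * x K 3 - y K 1 * y K 3}

lemma tau_P_ne : tau K (x K 0 * x K 2 - y K 0 * y K 2) ≠ 0 := by
  have : tau K (x K 0 * x K 2 - y K 0 * y K 2) =
      Polynomial.X ^ 32 - Polynomial.X ^ 28 := by
    simp only [map_sub, map_mul, x, y, tau, aeval_X, wt, Sum.elim_inl, Sum.elim_inr,
      Matrix.cons_val_zero, Matrix.cons_val_two, Matrix.tail_cons, Matrix.head_cons,
      ← pow_add]
  rw [this]
  intro hcon
  have := congrArg (Polynomial.coeff · 32) hcon
  simp [Polynomial.coeff_X_pow] at this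

/-- Every nonzero homogeneous polynomial in J_{P2} ∩ J_{K13} has total degree at least 4. -/
theorem JP2_inter_JK13_generated_in_degree_ge_four
    (f : MvPolynomial (Fin 4 ⊕ Fin 4) K) (d : ℕ)
    (hf : f ∈ JP2 K ⊓ JK13 K) (hhom : f.IsHomogeneous d) (hne : f ≠ 0) :
    4 ≤ d := by
  by_contra hlt
  push_neg at hlt
  rw [Submodule.mem_inf] at hf
  obtain ⟨hfP, hfK⟩ := hf
  rw [JP2, Ideal.mem_span_singleton'] at hfP
  obtain ⟨g, hg⟩ := hfP
  -- tau kills f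
  have htf : tau K f = 0 := by
    have hker : JK13 K ≤ RingHom.ker (tau K).toRingHom := by
      rw [JK13, Ideal.span_le]
      rintro q hq
      simp only [Set.mem_insert_iff, Set.mem_singleton_iff] at hq
      rcases hq with rfl | rfl | rfl <;>
        · rw [SetLike.mem_coe, RingHom.mem_ker]
          simp only [AlgHom.toRingHom_eq_coe, RingHom.coe_coe, map_sub, map_mul, x, y,
            tau, aeval_X, wt, Sum.elim_inl, Sum.elim_inr, Matrix.cons_val_zero,
            Matrix.cons_val_one, Matrix.head_cons, Matrix.cons_val_two, Matrix.tail_cons,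
            Matrix.cons_val_three, ← pow_add]
          norm_num
    have := hker hfK
    rwa [RingHom.mem_ker] at this
  -- P is homogeneous of degree 2
  have hPhom : (x K 0 * x K 2 - y K 0 * y K 2).IsHomogeneous 2 := by
    apply IsHomogeneous.sub <;>
      exact (isHomogeneous_X _ _).mul (isHomogeneous_X _ _)
  -- decomposition
  have hdecomp : f = ∑ i ∈ Finset.range (g.totalDegree + 1),
      if d = i + 2 then homogeneousComponent i g * (x K 0 * x K 2 - y K 0 * y K 2)
      else 0 := by
    have h1 : f = homogeneousComponent d f := by
      rw [homogeneousComponent_of_mem ((mem_homogeneousSubmodule _ _).2 hhom),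
        if_pos rfl]
    calc f = homogeneousComponent d f := h1
      _ = homogeneousComponent d
          ((∑ i ∈ Finset.range (g.totalDegree + 1), homogeneousComponent i g) *
            (x K 0 * x K 2 - y K 0 * y K 2)) := by
          rw [sum_homogeneousComponent, hg]
      _ = ∑ i ∈ Finset.range (g.totalDegree + 1),
          homogeneousComponent d
            (homogeneousComponent i g * (x K 0 * x K 2 - y K 0 * y K 2)) := by
          rw [Finset.sum_mul, map_sum]
      _ = _ := by
          refine Finset.sum_congr rfl (fun i _ => ?_)
          exact homogeneousComponent_of_mem
            ((mem_homogeneousSubmodule _ _).2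
              ((homogeneousComponent_isHomogeneous i g).mul hPhom))
  -- helper to finish from f = (component e) * P with e ≤ 1
  have finish : ∀ e : ℕ, e ≤ 1 →
      f = homogeneousComponent e g * (x K 0 * x K 2 - y K 0 * y K 2) → False := by
    intro e he hfe
    have hg'ne : homogeneousComponent e g ≠ 0 := by
      intro h0
      rw [h0, zero_mul] at hfe
      exact hne hfe
    have htg : tau K (homogeneousComponent e g) = 0 := by
      have := htf
      rw [hfe, map_mul] at this
      rcases mul_eq_zero.mp this with h | h
      · exact h
      · exact absurd h (tau_P_ne K)
    have hdeg : (homogeneousComponent e g).totalDegree ≤ 1 :=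
      le_trans (homogeneousComponent_isHomogeneous e g).totalDegree_le he
    exact hg'ne (tau_inj_low K _ hdeg htg)
  interval_cases d
  · exact hne (hdecomp.trans (Finset.sum_eq_zero fun i _ => if_neg (by omega)))
  · exact hne (hdecomp.trans (Finset.sum_eq_zero fun i _ => if_neg (by omega)))
  · refine finish 0 (by norm_num) ?_
    rw [hdecomp, Finset.sum_eq_single 0]
    · rw [if_pos rfl]
    · intro i _ hi; exact if_neg (by omega)
    · intro h; exact absurd (Finset.mem_range.2 (Nat.succ_pos _)) h
  · refine finish 1 (by norm_num) ?_
    rw [hdecomp, Finset.sum_eq_single 1]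
    · rw [if_pos rfl]
    · intro i _ hi; exact if_neg (by omega)
    · intro h
      have h1 : g.totalDegree < 1 := by
        simp only [Finset.mem_range, not_lt] at h; omega
      rw [if_pos rfl, homogeneousComponent_eq_zero 1 g h1, zero_mul]

end
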